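/- With U as above and α = β = 1/√2, under unitarity constraints Re⟨e₀|e₂⟩ + Re⟨e₁|e₃⟩ = 0 and Im⟨e₀|e₂⟩ + Im⟨e₁|e₃⟩ = 0, it holds that p_{a,ā} − p_{b,b̄} = (1/2)(Im⟨e₀|e₁⟩ − Re⟨e₀|e₁⟩ + Im⟨e₂|e₃⟩ − Re⟨e₂|e₃⟩) − Re⟨e₁|e₂⟩. -/
import Mathlib


open scoped ComplexInnerProductSpace

/-- The embedding x ↦ |0⟩⊗x of the ancilla into qubit ⊗ ancilla (modeled as E × E
with the L² inner product, first component = |0⟩ slot, second = |1⟩ slot). -/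
noncomputable def emb0 {E : Type*} [NormedAddCommGroup E] [InnerProductSpace ℂ E]
    (x : E) : WithLp 2 (E × E) := (WithLp.equiv 2 (E × E)).symm (x, 0)

/-- The embedding x ↦ |1⟩⊗x of the ancilla into qubit ⊗ ancilla. -/
noncomputable def emb1 {E : Type*} [NormedAddCommGroup E] [InnerProductSpace ℂ E]
    (x : E) : WithLp 2 (E × E) := (WithLp.equiv 2 (E × E)).symm (0, x)

/-- for α = β = 1/√2, under the unitarity constraints
Re⟨e₀|e₂⟩+Re⟨e₁|e₃⟩ = 0 and Im⟨e₀|e₂⟩+Im⟨e₁|e₃⟩ = 0,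
p_{a,ā} − p_{b,b̄} = ½(Im⟨e₀|e₁⟩−Re⟨e₀|e₁⟩+Im⟨e₂|e₃⟩−Re⟨e₂|e₃⟩) − Re⟨e₁|e₂⟩. -/
theorem paa_minus_pbb {E : Type*} [NormedAddCommGroup E]
    [InnerProductSpace ℂ E] [FiniteDimensional ℂ E]
    (U : WithLp 2 (E × E) ≃ₗᵢ[ℂ] WithLp 2 (E × E))
    (χ e0 e1 e2 e3 : E) (hχ : ‖χ‖ = 1)
    (hU0 : U (emb0 χ) = emb0 e0 + emb1 e1)
    (hU1 : U (emb1 χ) = emb0 e2 + emb1 e3)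
    (paa pbb : ℝ)
    (hpaa : paa = (1/4) * ‖e0 + e2 - e1 - e3‖^2)
    (hpbb : pbb = (1/4) * ‖e0 + Complex.I • e1 + Complex.I • e2 - e3‖^2)
    (hre : ⟪e0, e2⟫.re + ⟪e1, e3⟫.re = 0)
    (him : ⟪e0, e2⟫.im + ⟪e1, e3⟫.im = 0) :
    paa - pbb = (1/2) * (⟪e0, e1⟫.im - ⟪e0, e1⟫.re + ⟪e2, e3⟫.im - ⟪e2, e3⟫.re)
      - ⟪e1, e2⟫.re := by
  subst hpaa hpbb
  have hn : ∀ v : E, ‖v‖^2 = ⟪v, v⟫.re := fun v => by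
    rw [← @inner_self_eq_norm_sq ℂ]; rfl
  rw [hn, hn]
  have c01 := @inner_conj_symm ℂ E _ _ _ e1 e0
  have c02 := @inner_conj_symm ℂ E _ _ _ e2 e0
  have c03 := @inner_conj_symm ℂ E _ _ _ e3 e0
  have c12 := @inner_conj_symm ℂ E _ _ _ e2 e1
  have c13 := @inner_conj_symm ℂ E _ _ _ e3 e1
  have c23 := @inner_conj_symm ℂ E _ _ _ e3 e2
  simp only [inner_sub_left, inner_sub_right, inner_add_left, inner_add_right,
    inner_smul_left, inner_smul_right, Complex.conj_I, ← c01, ← c02, ← c03,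
    ← c12, ← c13, ← c23, Complex.add_re, Complex.sub_re, Complex.mul_re,
    Complex.mul_im, Complex.conj_re, Complex.conj_im, Complex.I_re, Complex.I_im,
    Complex.neg_re, Complex.neg_im, Complex.add_im, Complex.sub_im]
  ring_nf
  nlinarith [hre, him]
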